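/- Let u be a C² function on a domain containing the strip Ω^(α) = {(x,y) ∈ Ω : |y| ≤ α} with Δu = -λu, u = 0 on ∂Ω, 0 < u ≤ 1, λ ≤ π² + C L⁻², and suppose the superlevel set {u ≥ 1-ε} is contained in {|y| ≤ α}. If α < c₁√ε for a sufficiently small absolute constant c₁ (depending on C), then sup u < 1 on Ω^(α); consequently, if max u = 1 is attained in Ω^(α), the superlevel set {u ≥ 1-ε} cannot fit between the lines y = ±α with α < c₁√ε. -/

import Mathlib

open Real

/-- The Laplacian on `ℝ × ℝ` via the second iterated Fréchet derivative. -/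
noncomputable def lap2 (u : ℝ × ℝ → ℝ) (p : ℝ × ℝ) : ℝ :=
  iteratedFDeriv ℝ 2 u p ![(1, 0), (1, 0)] + iteratedFDeriv ℝ 2 u p ![(0, 1), (0, 1)]


lemma line_second_deriv (f : ℝ × ℝ → ℝ) (q e : ℝ × ℝ) (hf : ContDiffAt ℝ 2 f q) :
    iteratedFDeriv ℝ 2 f q ![e, e] = deriv (deriv (fun t : ℝ => f (q + t • e))) 0 := by
  have hL : ∀ τ : ℝ, HasDerivAt (fun t : ℝ => q + t • e) e τ := fun τ => by
    simpa using ((hasDerivAt_id τ).smul_const e).const_add q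
  have hev : ∀ᶠ x in nhds q, DifferentiableAt ℝ f x :=
    (hf.eventually (by norm_num)).mono fun x hx => hx.differentiableAt (by norm_num)
  have hLcont : Continuous (fun t : ℝ => q + t • e) := by fun_prop
  have hev0 : ∀ᶠ τ in nhds (0:ℝ), DifferentiableAt ℝ f (q + τ • e) := by
    have : Filter.Tendsto (fun t : ℝ => q + t • e) (nhds 0) (nhds q) := by
      have h := hLcont.continuousAt (x := (0:ℝ))
      unfold ContinuousAt at h
      simpa using h
    exact this.eventually hev
  have key : deriv (fun t : ℝ => f (q + t • e)) =ᶠ[nhds (0:ℝ)]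
      fun τ => fderiv ℝ f (q + τ • e) e := by
    filter_upwards [hev0] with τ hτ
    exact ((hτ.hasFDerivAt).comp_hasDerivAt τ (hL τ)).deriv
  rw [key.deriv_eq]
  have hf' : DifferentiableAt ℝ (fderiv ℝ f) q :=
    (hf.fderiv_right (m := 1) (by norm_num)).differentiableAt (by norm_num)
  have h1 : HasDerivAt (fun τ : ℝ => fderiv ℝ f (q + τ • e)) (fderiv ℝ (fderiv ℝ f) q e) 0 := by
    have hq : q + (0:ℝ) • e = q := by simp
    have hfd : HasFDerivAt (fderiv ℝ f) (fderiv ℝ (fderiv ℝ f) q) (q + (0:ℝ) • e) := by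
      rw [hq]; exact hf'.hasFDerivAt
    have := hfd.comp_hasDerivAt 0 (hL 0)
    simpa [Function.comp_def] using this
  have h2 : HasDerivAt (fun τ : ℝ => fderiv ℝ f (q + τ • e) e)
      (fderiv ℝ (fderiv ℝ f) q e e) 0 := by
    have := ((ContinuousLinearMap.apply ℝ ℝ e).hasFDerivAt.comp_hasDerivAt 0 h1)
    simpa [Function.comp_def] using this
  rw [h2.deriv, iteratedFDeriv_two_apply]
  simp

lemma second_deriv_nonpos_of_isLocalMax {g : ℝ → ℝ} (hg : ContDiffAt ℝ 2 g 0)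
    (hmax : IsLocalMax g 0) : deriv (deriv g) 0 ≤ 0 := by
  by_contra hpos
  push_neg at hpos
  obtain ⟨t, ht_ev, ht_open, ht0⟩ := eventually_nhds_iff.mp (hg.eventually (by norm_num))
  have htcd : ContDiffOn ℝ 2 g t := fun x hx => (ht_ev x hx).contDiffWithinAt
  have hdg : ContDiffOn ℝ 1 (deriv g) t :=
    htcd.deriv_of_isOpen ht_open (by norm_num)
  have hddg : ContinuousOn (deriv (deriv g)) t :=
    hdg.continuousOn_deriv_of_isOpen ht_open le_rfl
  have hcA : ContinuousAt (deriv (deriv g)) 0 :=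
    hddg.continuousAt (ht_open.mem_nhds ht0)
  have hev : ∀ᶠ x in nhds (0:ℝ), 0 < deriv (deriv g) x ∧ g x ≤ g 0 ∧ x ∈ t := by
    filter_upwards [hcA.preimage_mem_nhds (Ioi_mem_nhds hpos), hmax,
      ht_open.mem_nhds ht0] with x h1 h2 h3
    exact ⟨h1, h2, h3⟩
  obtain ⟨δ, hδ, hball⟩ := Metric.eventually_nhds_iff.mp hev
  set c := δ/2 with hc
  have hcpos : 0 < c := by positivity
  have hsub : Set.Icc (0:ℝ) c ⊆ Metric.ball (0:ℝ) δ := by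
    intro x hx
    rw [Metric.mem_ball, Real.dist_eq, sub_zero, abs_of_nonneg hx.1]
    linarith [hx.2]
  have hprop : ∀ x ∈ Set.Icc (0:ℝ) c, 0 < deriv (deriv g) x ∧ g x ≤ g 0 ∧ x ∈ t := by
    intro x hx
    have := hsub hx
    rw [Metric.mem_ball, Real.dist_eq, sub_zero] at this
    exact hball (by simpa [Real.dist_eq] using this)
  have hmono1 : StrictMonoOn (deriv g) (Set.Icc 0 c) := by
    apply strictMonoOn_of_deriv_pos (convex_Icc 0 c)
    · exact (hdg.continuousOn).mono (fun x hx => (hprop x hx).2.2)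
    · intro x hx
      rw [interior_Icc] at hx
      exact (hprop x ⟨le_of_lt hx.1, le_of_lt hx.2⟩).1
  have hd0 : deriv g 0 = 0 := hmax.deriv_eq_zero
  have hmono2 : StrictMonoOn g (Set.Icc 0 c) := by
    apply strictMonoOn_of_deriv_pos (convex_Icc 0 c)
    · exact (htcd.continuousOn).mono (fun x hx => (hprop x hx).2.2)
    · intro x hx
      rw [interior_Icc] at hx
      have := hmono1 ⟨le_refl 0, le_of_lt hcpos⟩ ⟨le_of_lt hx.1, le_of_lt hx.2⟩ hx.1
      rw [hd0] at this
      exact this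
  have := hmono2 ⟨le_refl 0, le_of_lt hcpos⟩ ⟨le_of_lt hcpos, le_refl c⟩ hcpos
  have hle := (hprop c ⟨le_of_lt hcpos, le_refl c⟩).2.1
  linarith


lemma deriv2_cos_line (a d : ℝ) :
    deriv (deriv (fun t : ℝ => Real.cos (a + d * t))) 0 = -d ^ 2 * Real.cos a := by
  have hinner : ∀ t : ℝ, HasDerivAt (fun t : ℝ => a + d * t) d t := fun t => by
    simpa using ((hasDerivAt_id t).const_mul d).const_add a
  have h1 : deriv (fun t : ℝ => Real.cos (a + d * t))
      = fun t : ℝ => -Real.sin (a + d * t) * d := by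
    funext t
    exact ((Real.hasDerivAt_cos (a + d * t)).comp t (hinner t)).deriv
  rw [h1]
  have h2 : HasDerivAt (fun t : ℝ => -Real.sin (a + d * t) * d)
      (-(Real.cos (a + d * 0) * d) * d) 0 := by
    have h := (((Real.hasDerivAt_sin (a + d * 0)).comp 0 (hinner 0)).neg).mul_const d; exact h
  rw [h2.deriv]
  ring_nf

lemma diffAt_deriv {f : ℝ → ℝ} (hf : ContDiffAt ℝ 2 f 0) :
    DifferentiableAt ℝ (deriv f) 0 := by
  have h1 : ContDiffAt ℝ 1 (fderiv ℝ f) 0 := hf.fderiv_right (by norm_num)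
  have h2 : DifferentiableAt ℝ (fun x => fderiv ℝ f x 1) 0 :=
    (((ContinuousLinearMap.apply ℝ ℝ (1:ℝ)).contDiff.contDiffAt).comp 0 h1).differentiableAt
      (by norm_num)
  have h3 : deriv f = fun x => fderiv ℝ f x 1 := funext fun x => fderiv_apply_one_eq_deriv.symm
  rw [h3]
  exact h2

lemma deriv2_sub_const_mul {f g : ℝ → ℝ} (hf : ContDiffAt ℝ 2 f 0) (hg : ContDiffAt ℝ 2 g 0)
    (M : ℝ) :
    deriv (deriv (fun t => f t - M * g t)) 0 = deriv (deriv f) 0 - M * deriv (deriv g) 0 := by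
  have hev : (deriv fun t => f t - M * g t) =ᶠ[nhds (0:ℝ)]
      fun x => deriv f x - M * deriv g x := by
    filter_upwards [hf.eventually (by norm_num), hg.eventually (by norm_num)] with x hfx hgx
    have hfd : DifferentiableAt ℝ f x := hfx.differentiableAt (by norm_num)
    have hgd : DifferentiableAt ℝ g x := hgx.differentiableAt (by norm_num)
    rw [deriv_fun_sub hfd (hgd.const_mul M), deriv_const_mul M hgd]
  rw [hev.deriv_eq, deriv_fun_sub (diffAt_deriv hf) ((diffAt_deriv hg).const_mul M),
    deriv_const_mul M (diffAt_deriv hg)]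

set_option maxHeartbeats 1600000 in
/-- If `u` is the first Dirichlet eigenfunction (normalized, `0 < u ≤ 1`,
`Δu = -λu`, `u = 0` on `∂Ω`, `λ ≤ π² + C L⁻²`) and its superlevel set `{u ≥ 1-ε}` is
contained in the strip `{|y| ≤ α}` with `α < c₁ √ε` for a sufficiently small constant
`c₁` depending only on `C`, then `u < 1` on the strip; i.e. the maximum value `1` cannot
be attained there. -/
theorem stmt_9 (C : ℝ) (hC : 0 < C) : ∃ c₁ : ℝ, 0 < c₁ ∧
    ∀ (Ω : Set (ℝ × ℝ)) (u : ℝ × ℝ → ℝ) (lam L ε α : ℝ),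
      IsOpen Ω → Convex ℝ Ω → Bornology.IsBounded Ω →
      ContinuousOn u (closure Ω) → ContDiffOn ℝ 2 u Ω →
      (∀ p ∈ Ω, lap2 u p = -lam * u p) →
      (∀ p ∈ frontier Ω, u p = 0) →
      (∀ p ∈ Ω, 0 < u p ∧ u p ≤ 1) →
      1 ≤ L → 0 < ε → ε ≤ 1 / 2 →
      lam ≤ π ^ 2 + C * L⁻¹ ^ 2 →
      0 < α →
      ({p ∈ Ω | 1 - ε ≤ u p} ⊆ {p : ℝ × ℝ | |p.2| ≤ α}) →
      α < c₁ * Real.sqrt ε →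
      ∀ p ∈ Ω, |p.2| ≤ α → u p < 1 := by
  have hπ : (0:ℝ) < π := Real.pi_pos
  set b : ℝ := Real.sqrt (π ^ 2 + C + 1) with hbdef
  have hbase : (0:ℝ) < π ^ 2 + C + 1 := by positivity
  have hb2 : b ^ 2 = π ^ 2 + C + 1 := Real.sq_sqrt (le_of_lt hbase)
  have hbpos : 0 < b := Real.sqrt_pos.mpr hbase
  refine ⟨1 / (2 * b), by positivity, ?_⟩
  intro Ω u lam L ε α hΩopen hconv hbdd hucont hu2 heq hbdry hbound hL hε hε2 hlam hα hsuper hαc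
  intro p hpΩ hpα
  -- basic numeric facts
  have hsε : 0 < Real.sqrt ε := Real.sqrt_pos.mpr hε
  have hsε1 : Real.sqrt ε ≤ 1 := by
    rw [show (1:ℝ) = Real.sqrt 1 by simp]
    exact Real.sqrt_le_sqrt (by linarith)
  have hsε2 : Real.sqrt ε ^ 2 = ε := Real.sq_sqrt (le_of_lt hε)
  set α' : ℝ := (α + (1 / (2 * b)) * Real.sqrt ε) / 2 with hα'def
  have hαα' : α < α' := by rw [hα'def]; linarith
  have hα'lt : α' < (1 / (2 * b)) * Real.sqrt ε := by rw [hα'def]; linarith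
  have hα'pos : 0 < α' := lt_trans hα hαα'
  have hbα' : b * α' < Real.sqrt ε / 2 := by
    have : b * α' < b * ((1 / (2 * b)) * Real.sqrt ε) := by
      exact mul_lt_mul_of_pos_left hα'lt hbpos
    calc b * α' < b * ((1 / (2 * b)) * Real.sqrt ε) := this
    _ = Real.sqrt ε / 2 := by field_simp
  have hεhalf : 0 < 1 - ε := by linarith
  -- lower bound on the comparison cosine
  have hvlb : ∀ y : ℝ, |y| ≤ α' → 1 - ε < Real.cos (b * y) := by
    intro y hy
    have h1 : (b * y) ^ 2 ≤ (b * α') ^ 2 := by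
      have : |b * y| ≤ b * α' := by
        rw [abs_mul, abs_of_pos hbpos]
        exact mul_le_mul_of_nonneg_left hy (le_of_lt hbpos)
      calc (b * y) ^ 2 = |b * y| ^ 2 := (sq_abs _).symm
      _ ≤ (b * α') ^ 2 := by
        apply pow_le_pow_left₀ (abs_nonneg _) this
    have h2 : (b * α') ^ 2 < (Real.sqrt ε / 2) ^ 2 := by
      apply pow_lt_pow_left₀ hbα' (by positivity)
      norm_num
    have h3 : (Real.sqrt ε / 2) ^ 2 = ε / 4 := by
      rw [div_pow, hsε2]; norm_num
    have h4 := Real.one_sub_sq_div_two_le_cos (x := b * y)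
    nlinarith
  have hvpos : ∀ y : ℝ, |y| ≤ α' → 0 < Real.cos (b * y) := fun y hy =>
    lt_trans hεhalf (hvlb y hy)
  -- the compact set and the maximum of u / v
  clear_value b
  set K : Set (ℝ × ℝ) := closure Ω ∩ {x : ℝ × ℝ | |x.2| ≤ α'} with hKdef
  have hKcl : IsClosed ({x : ℝ × ℝ | |x.2| ≤ α'}) := isClosed_le (continuous_snd.abs) continuous_const
  have hKcompact : IsCompact K := hbdd.isCompact_closure.inter_right hKcl
  have hpK : p ∈ K := ⟨subset_closure hpΩ, le_of_lt (lt_of_le_of_lt hpα hαα')⟩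
  have hvcont : Continuous (fun x : ℝ × ℝ => Real.cos (b * x.2)) := by fun_prop
  have hcont : ContinuousOn (fun x : ℝ × ℝ => u x / Real.cos (b * x.2)) K := by
    apply ContinuousOn.div (hucont.mono Set.inter_subset_left) hvcont.continuousOn
    intro x hx
    exact ne_of_gt (hvpos x.2 hx.2)
  obtain ⟨q₀, hq₀K, hq₀max⟩ := hKcompact.exists_isMaxOn ⟨p, hpK⟩ hcont
  rw [isMaxOn_iff] at hq₀max
  set M : ℝ := u q₀ / Real.cos (b * q₀.2) with hMdef
  clear_value M
  have hvq₀ : 0 < Real.cos (b * q₀.2) := hvpos q₀.2 hq₀K.2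
  have hvp : 0 < Real.cos (b * p.2) := hvpos p.2 (le_of_lt (lt_of_le_of_lt hpα hαα'))
  have hup : 0 < u p := (hbound p hpΩ).1
  have hMp : u p / Real.cos (b * p.2) ≤ M := hq₀max p hpK
  have hM0 : 0 < M := lt_of_lt_of_le (div_pos hup hvp) hMp
  by_cases hq₀Ω : q₀ ∈ Ω
  · by_cases hq₀lt : |q₀.2| < α'
    · -- interior case: contradiction via maximum principle
      exfalso
      have huq₀pos : 0 < u q₀ := (hbound q₀ hq₀Ω).1
      have huq₀ : u q₀ = M * Real.cos (b * q₀.2) := by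
        rw [hMdef]
        field_simp
      set w : ℝ × ℝ → ℝ := fun x => u x - M * Real.cos (b * x.2) with hwdef
      clear_value w
      have hUnhds : (Ω ∩ {x : ℝ × ℝ | |x.2| < α'}) ∈ nhds q₀ :=
        (hΩopen.inter (isOpen_lt (continuous_snd.abs) continuous_const)).mem_nhds ⟨hq₀Ω, hq₀lt⟩
      have hwmax : IsLocalMax w q₀ := by
        filter_upwards [hUnhds] with x hx
        have hx2 : |x.2| < α' := hx.2
        have hxK : x ∈ K := ⟨subset_closure hx.1, le_of_lt hx2⟩
        have h1 : u x / Real.cos (b * x.2) ≤ M := hq₀max x hxK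
        have h2 : u x ≤ M * Real.cos (b * x.2) :=
          (div_le_iff₀ (hvpos x.2 hxK.2)).mp h1
        simp only [hwdef]
        rw [← huq₀]
        simp only [huq₀]
        linarith
      have hucda : ContDiffAt ℝ 2 u q₀ := hu2.contDiffAt (hΩopen.mem_nhds hq₀Ω)
      -- generic direction estimate
      have hdir : ∀ e : ℝ × ℝ,
          iteratedFDeriv ℝ 2 u q₀ ![e, e] - M * (-(b * e.2) ^ 2 * Real.cos (b * q₀.2)) ≤ 0 := by
        intro e
        have hline_cd : ContDiff ℝ 2 (fun t : ℝ => q₀ + t • e) :=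
          contDiff_const.add (contDiff_id.smul contDiff_const)
        have hL0 : (fun t : ℝ => q₀ + t • e) 0 = q₀ := by simp
        have hgu_cd : ContDiffAt ℝ 2 (fun t : ℝ => u (q₀ + t • e)) 0 := by
          have : ContDiffAt ℝ 2 u ((fun t : ℝ => q₀ + t • e) 0) := by rw [hL0]; exact hucda
          exact this.comp 0 hline_cd.contDiffAt
        have hgv_eq : (fun t : ℝ => Real.cos (b * (q₀ + t • e).2))
            = fun t : ℝ => Real.cos (b * q₀.2 + (b * e.2) * t) := by
          funext t
          congr 1
          simp [Prod.snd_add, Prod.smul_snd, smul_eq_mul]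
          ring
        have hgv_cd : ContDiffAt ℝ 2 (fun t : ℝ => Real.cos (b * (q₀ + t • e).2)) 0 := by
          rw [hgv_eq]
          exact (Real.contDiff_cos.comp
            (contDiff_const.add (contDiff_const.mul contDiff_id))).contDiffAt
        have hw_cd : ContDiffAt ℝ 2 (fun t : ℝ => w (q₀ + t • e)) 0 := by
          simp only [hwdef]
          exact hgu_cd.sub (hgv_cd.const_smul M)
        have hwl_max : IsLocalMax (fun t : ℝ => w (q₀ + t • e)) 0 := by
          have htend : Filter.Tendsto (fun t : ℝ => q₀ + t • e) (nhds 0) (nhds q₀) := by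
            have hcq : ContinuousAt (fun t : ℝ => q₀ + t • e) 0 := by fun_prop
            unfold ContinuousAt at hcq
            rw [hL0] at hcq
            exact hcq
          have hwmax' : IsMaxFilter w (nhds q₀) ((fun t : ℝ => q₀ + t • e) 0) := by
            rw [hL0]; exact hwmax
          exact IsMaxFilter.comp_tendsto (f := w) (g := fun t : ℝ => q₀ + t • e)
            (b := (0:ℝ)) hwmax' htend
        have hkey := second_deriv_nonpos_of_isLocalMax hw_cd hwl_max
        have hsplit : deriv (deriv (fun t : ℝ => w (q₀ + t • e))) 0
            = deriv (deriv (fun t : ℝ => u (q₀ + t • e))) 0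
              - M * deriv (deriv (fun t : ℝ => Real.cos (b * (q₀ + t • e).2))) 0 := by
          simp only [hwdef]
          exact deriv2_sub_const_mul hgu_cd hgv_cd M
        have hA : iteratedFDeriv ℝ 2 u q₀ ![e, e]
            = deriv (deriv (fun t : ℝ => u (q₀ + t • e))) 0 :=
          line_second_deriv u q₀ e hucda
        have hB : deriv (deriv (fun t : ℝ => Real.cos (b * (q₀ + t • e).2))) 0
            = -(b * e.2) ^ 2 * Real.cos (b * q₀.2) := by
          rw [hgv_eq]
          exact deriv2_cos_line (b * q₀.2) (b * e.2)
        rw [hsplit, ← hA, hB] at hkey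
        exact hkey
      have hlap := heq q₀ hq₀Ω
      rw [lap2] at hlap
      have h1 : iteratedFDeriv ℝ 2 u q₀ ![(1, 0), (1, 0)] ≤ 0 := by
        have h1' := hdir (1, 0)
        have hz : ((1:ℝ), (0:ℝ)).2 = 0 := rfl
        rw [hz, mul_zero] at h1'
        simpa using h1'
      have h2 : iteratedFDeriv ℝ 2 u q₀ ![(0, 1), (0, 1)]
          + M * (b ^ 2 * Real.cos (b * q₀.2)) ≤ 0 := by
        have h2' := hdir (0, 1)
        have hz : ((0:ℝ), (1:ℝ)).2 = 1 := rfl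
        rw [hz, mul_one, neg_mul, mul_neg, sub_neg_eq_add] at h2'
        exact h2'
      set A1 : ℝ := iteratedFDeriv ℝ 2 u q₀ ![(1, 0), (1, 0)] with hA1def
      set A2 : ℝ := iteratedFDeriv ℝ 2 u q₀ ![(0, 1), (0, 1)] with hA2def
      clear_value A1 A2
      clear hdir
      have hCL : C * L⁻¹ ^ 2 ≤ C := by
        have hLi : L⁻¹ ≤ 1 := by
          rw [inv_le_one_iff₀]; right; exact hL
        have hLi0 : 0 ≤ L⁻¹ := by positivity
        have h1 : L⁻¹ ^ 2 ≤ 1 := by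
          rw [sq]
          exact mul_le_one₀ hLi hLi0 hLi
        have := mul_le_mul_of_nonneg_left h1 (le_of_lt hC)
        linarith
      have hlamle : lam ≤ π ^ 2 + C := by linarith
      have hMv : M * Real.cos (b * q₀.2) = u q₀ := huq₀.symm
      -- combine
      have hsum : -lam * u q₀ + M * b ^ 2 * Real.cos (b * q₀.2) ≤ 0 := by
        linarith [h1, h2, hlap]
      have hrepl : M * b ^ 2 * Real.cos (b * q₀.2) = b ^ 2 * u q₀ := by
        rw [huq₀]; ring
      rw [hrepl] at hsum
      have hprod : (b ^ 2 - lam) * u q₀ ≤ 0 := by linarith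
      have hpos2 : 0 < (b ^ 2 - lam) * u q₀ :=
        mul_pos (by rw [hb2]; linarith) huq₀pos
      linarith
    · -- boundary-of-strip case: the maximum value M is < 1
      have hq₀eq : |q₀.2| = α' := le_antisymm hq₀K.2 (not_lt.mp hq₀lt)
      have hq₀u : u q₀ < 1 - ε := by
        by_contra h'
        push_neg at h'
        have hmem : q₀ ∈ {x : ℝ × ℝ | |x.2| ≤ α} := hsuper ⟨hq₀Ω, h'⟩
        have : |q₀.2| ≤ α := hmem
        rw [hq₀eq] at this
        linarith
      have hM1 : M < 1 := by
        rw [hMdef, div_lt_one hvq₀]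
        exact lt_trans hq₀u (hvlb q₀.2 hq₀K.2)
      have hle : u p ≤ M * Real.cos (b * p.2) := (div_le_iff₀ hvp).mp hMp
      have hc1 : Real.cos (b * p.2) ≤ 1 := Real.cos_le_one _
      have h3 : M * Real.cos (b * p.2) ≤ M * 1 :=
        mul_le_mul_of_nonneg_left hc1 (le_of_lt hM0)
      linarith
  · -- the maximum is on the boundary of Ω: contradiction with M > 0
    exfalso
    have hq₀fr : q₀ ∈ frontier Ω := by
      rw [hΩopen.frontier_eq]
      exact ⟨hq₀K.1, hq₀Ω⟩
    have hz : u q₀ = 0 := hbdry q₀ hq₀fr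
    rw [hMdef, hz, zero_div] at hM0
    exact lt_irrefl 0 hM0
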